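/- Let K be a field equipped with an absolute value |·| : K → ℝ. Let A be a commutative K-algebra, π : K[X_1,…,X_N] →ₐ A a surjective K-algebra homomorphism, φ : A →ₐ A a K-algebra endomorphism, and P₀ : A →ₐ K a K-point of A (a K-algebra homomorphism to K). Set y := π(X_1). Suppose there exists ε > 0 such that |P₀(φⁿ(y))| > ε for all n ≥ 0, and let l := limsup_{n→∞} (1/n)·log(log |P₀(φⁿ(y))|). Then l ≤ limsup_{n→∞} (1/n)·log deg(φⁿ;π), i.e. l is at most the algebraic entropy of φ relative to π. -/

import Mathlib

open Filter

lemma log_mono_aux {x y : ℝ} (hx : 0 ≤ x) (hy : 1 ≤ y) (h : x ≤ y) :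
    Real.log x ≤ Real.log y := by
  rcases eq_or_lt_of_le hx with h0 | h0
  · rw [← h0, Real.log_zero]; exact Real.log_nonneg hy
  · exact Real.log_le_log h0 h

lemma one_le_pow_aux {a : ℝ} (h : 1 ≤ a) (k : ℕ) : 1 ≤ a ^ k := by
  have := pow_le_pow_right₀ h (Nat.zero_le k)
  rwa [pow_zero] at this

lemma le_mul3_aux {a b c : ℝ} (ha : 0 ≤ a) (hb : 1 ≤ b) (hc : 1 ≤ c) :
    a ≤ a * b * c := by
  calc a = a * 1 * 1 := by ring
    _ ≤ a * b * c := by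
        apply mul_le_mul (mul_le_mul le_rfl hb zero_le_one ha) hc zero_le_one
        exact mul_nonneg ha (by linarith)

lemma eval_abs_bound {K : Type*} [Field K] {N : ℕ} (v : AbsoluteValue K ℝ)
    (x : Fin N → K) (p : MvPolynomial (Fin N) K) :
    v (MvPolynomial.eval x p) ≤
      (∑ s ∈ p.support, v (MvPolynomial.coeff s p)) *
        (max 1 (∑ j, v (x j))) ^ p.totalDegree := by
  set B := max 1 (∑ j, v (x j)) with hB
  have hB1 : (1:ℝ) ≤ B := le_max_left _ _
  have hBx : ∀ j, v (x j) ≤ B := fun j =>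
    (Finset.single_le_sum (fun i _ => v.nonneg (x i)) (Finset.mem_univ j)).trans
      (le_max_right _ _)
  rw [MvPolynomial.eval_eq]
  refine (v.sum_le _ _).trans ?_
  rw [Finset.sum_mul]
  refine Finset.sum_le_sum fun s hs => ?_
  rw [v.map_mul]
  refine mul_le_mul_of_nonneg_left ?_ (v.nonneg _)
  calc v (∏ i ∈ s.support, x i ^ s i)
      = ∏ i ∈ s.support, v (x i) ^ s i := by
        rw [map_prod]; exact Finset.prod_congr rfl fun i _ => map_pow v _ _
    _ ≤ ∏ i ∈ s.support, B ^ s i :=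
        Finset.prod_le_prod (fun i _ => pow_nonneg (v.nonneg _) _)
          (fun i _ => pow_le_pow_left₀ (v.nonneg _) (hBx i) _)
    _ = B ^ (∑ i ∈ s.support, s i) := Finset.prod_pow_eq_pow_sum _ _ _
    _ ≤ B ^ p.totalDegree := by
        refine pow_le_pow_right₀ hB1 ?_
        simpa [Finsupp.sum] using MvPolynomial.le_totalDegree hs

lemma tendsto_log_succ_div : Filter.Tendsto (fun n : ℕ => Real.log (↑n + 1) / n)
    Filter.atTop (nhds 0) := by
  have h0 : Tendsto (fun x : ℝ => Real.log x / x) atTop (nhds 0) :=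
    Real.isLittleO_log_id_atTop.tendsto_div_nhds_zero
  have h1 : Tendsto (fun n : ℕ => ((n : ℝ) + 1)) atTop atTop :=
    tendsto_atTop_add_const_right _ 1 tendsto_natCast_atTop_atTop
  have h2 : Tendsto (fun n : ℕ => Real.log (↑n + 1) / (↑n + 1)) atTop (nhds 0) :=
    h0.comp h1
  have h3 : Tendsto (fun n : ℕ => ((n:ℝ) + 1) / n) atTop (nhds 1) := by
    have h4 : Tendsto (fun n : ℕ => 1 + 1/(n:ℝ)) atTop (nhds (1 + 0)) :=
      tendsto_const_nhds.add tendsto_one_div_atTop_nhds_zero_nat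
    rw [add_zero] at h4
    refine h4.congr' ?_
    filter_upwards [eventually_ge_atTop 1] with n hn
    have hn0 : (n:ℝ) ≠ 0 := Nat.cast_ne_zero.2 (Nat.one_le_iff_ne_zero.1 hn)
    field_simp
  have h4 := h2.mul h3
  rw [zero_mul] at h4
  refine h4.congr' ?_
  filter_upwards [eventually_ge_atTop 1] with n hn
  have hn0 : ((n:ℝ) + 1) ≠ 0 := by positivity
  field_simp

lemma tendsto_natdiv_div {m : ℕ} (hm : 0 < m) :
    Filter.Tendsto (fun n : ℕ => ((n / m : ℕ) : ℝ) / n) Filter.atTop (nhds (1 / m)) := by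
  have hmR : (0:ℝ) < m := Nat.cast_pos.2 hm
  have hlowt : Tendsto (fun n : ℕ => 1/(m:ℝ) - 1/n) atTop (nhds (1/m)) := by
    have h5 : Tendsto (fun n : ℕ => 1/(m:ℝ) - 1/n) atTop (nhds (1/(m:ℝ) - 0)) :=
      Tendsto.sub tendsto_const_nhds tendsto_one_div_atTop_nhds_zero_nat
    rwa [sub_zero] at h5
  refine tendsto_of_tendsto_of_tendsto_of_le_of_le' hlowt tendsto_const_nhds ?_ ?_
  · filter_upwards [eventually_ge_atTop 1] with n hn
    have hn0 : (0:ℝ) < n := by exact_mod_cast hn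
    have heq : (n:ℝ) = m * ↑(n/m) + ↑(n % m) := by exact_mod_cast (Nat.div_add_mod n m).symm
    have hmod : ((n % m : ℕ):ℝ) < m := by exact_mod_cast Nat.mod_lt n hm
    rw [sub_le_iff_le_add, ← add_div, div_le_div_iff₀ hmR hn0]
    nlinarith
  · filter_upwards [eventually_ge_atTop 1] with n hn
    have hn0 : (0:ℝ) < n := by exact_mod_cast hn
    have heq : (n:ℝ) = m * ↑(n/m) + ↑(n % m) := by exact_mod_cast (Nat.div_add_mod n m).symm
    have hmod : (0:ℝ) ≤ ((n % m : ℕ):ℝ) := Nat.cast_nonneg _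
    rw [div_le_div_iff₀ hn0 hmR]
    nlinarith

/-- The degree of a `K`-algebra endomorphism `φ` of `A` relative to a presentation
`π : K[X_1,…,X_N] →ₐ A`: the least `d` such that there is a tuple of polynomials
`q_j` of total degree at most `d` with `π (q j) = φ (π (X j))` for all `j`. -/
noncomputable def relDeg {K A : Type*} [Field K] [CommRing A] [Algebra K A] {N : ℕ}
    (φ : A →ₐ[K] A) (π : MvPolynomial (Fin N) K →ₐ[K] A) : ℕ :=
  sInf {d : ℕ | ∃ q : Fin N → MvPolynomial (Fin N) K,
    (∀ j, π (q j) = φ (π (MvPolynomial.X j))) ∧ ∀ j, (q j).totalDegree ≤ d}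

theorem lower_bound_for_relative_entropy {K A : Type*} [Field K] [CommRing A] [Algebra K A]
    (v : AbsoluteValue K ℝ) {N : ℕ} (hN : 0 < N)
    (π : MvPolynomial (Fin N) K →ₐ[K] A) (hπ : Function.Surjective π)
    (φ : A →ₐ[K] A) (P₀ : A →ₐ[K] K)
    (ε : ℝ) (hε : 0 < ε)
    (hbig : ∀ n : ℕ, ε < v (P₀ ((φ ^ n) (π (MvPolynomial.X ⟨0, hN⟩))))) :
    Filter.atTop.limsup (fun n : ℕ =>
        ((Real.log (Real.log (v (P₀ ((φ ^ n) (π (MvPolynomial.X ⟨0, hN⟩)))))) / n : ℝ) : EReal))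
      ≤ Filter.atTop.limsup
          (fun n : ℕ => ((Real.log (relDeg (φ ^ n) π) / n : ℝ) : EReal)) := by
  classical
  set x : ℕ → Fin N → K := fun n j => P₀ ((φ ^ n) (π (MvPolynomial.X j))) with hxdef
  have comp_eval : ∀ (n : ℕ) (p : MvPolynomial (Fin N) K),
      P₀ ((φ ^ n) (π p)) = MvPolynomial.eval (x n) p := by
    intro n p
    have h2 := MvPolynomial.aeval_unique (P₀.comp ((φ ^ n).comp π))
    have h3 : P₀ ((φ ^ n) (π p)) = (P₀.comp ((φ ^ n).comp π)) p := rfl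
    rw [h3, h2]
    have h4 : (⇑(P₀.comp ((φ ^ n).comp π)) ∘ MvPolynomial.X) = x n := rfl
    rw [h4, MvPolynomial.aeval_def, Algebra.algebraMap_self]
    rfl
  have key : ∀ m : ℕ, 1 ≤ m →
      Filter.atTop.limsup (fun n : ℕ =>
        ((Real.log (Real.log (v (x n ⟨0, hN⟩))) / n : ℝ) : EReal))
      ≤ ((Real.log (relDeg (φ ^ m) π) / m : ℝ) : EReal) := by
    intro m hm
    have hm0 : 0 < m := hm
    set d := relDeg (φ ^ m) π with hd
    have hne : {dd : ℕ | ∃ q : Fin N → MvPolynomial (Fin N) K,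
        (∀ j, π (q j) = (φ ^ m) (π (MvPolynomial.X j))) ∧
          ∀ j, (q j).totalDegree ≤ dd}.Nonempty := by
      choose p hp using fun j => hπ ((φ ^ m) (π (MvPolynomial.X j)))
      exact ⟨Finset.univ.sup fun j => (p j).totalDegree, p, fun j => hp j,
        fun j => Finset.le_sup (f := fun j => (p j).totalDegree) (Finset.mem_univ j)⟩
    obtain ⟨q, hq, hqd⟩ : ∃ q : Fin N → MvPolynomial (Fin N) K,
        (∀ j, π (q j) = (φ ^ m) (π (MvPolynomial.X j))) ∧
          ∀ j, (q j).totalDegree ≤ d := Nat.sInf_mem hne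
    set D := max 1 d with hD
    have hqD : ∀ j, (q j).totalDegree ≤ D := fun j => (hqd j).trans (le_max_right _ _)
    have hD1 : (1:ℝ) ≤ (D:ℝ) := by exact_mod_cast (le_max_left 1 d : 1 ≤ D)
    have hxm : ∀ n j, x (n + m) j = MvPolynomial.eval (x n) (q j) := by
      intro n j
      have h1 : (φ ^ (n + m)) (π (MvPolynomial.X j))
          = (φ ^ n) ((φ ^ m) (π (MvPolynomial.X j))) := by rw [pow_add]; rfl
      show P₀ ((φ ^ (n + m)) (π (MvPolynomial.X j))) = MvPolynomial.eval (x n) (q j)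
      rw [h1, ← hq j]
      exact comp_eval n (q j)
    set M : ℕ → ℝ := fun n => max 1 (∑ j, v (x n j)) with hMdef
    have hM1 : ∀ n, (1:ℝ) ≤ M n := fun n => le_max_left _ _
    have hM0 : ∀ n, (0:ℝ) < M n := fun n => lt_of_lt_of_le one_pos (hM1 n)
    set C : ℝ := max 1 (∑ j, ∑ s ∈ (q j).support, v (MvPolynomial.coeff s (q j))) with hCdef
    have hC1 : (1:ℝ) ≤ C := le_max_left _ _
    have hC0 : (0:ℝ) < C := lt_of_lt_of_le one_pos hC1
    have hrec : ∀ n, M (n + m) ≤ C * M n ^ D := by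
      intro n
      have hpow1 : (1:ℝ) ≤ M n ^ D := one_le_pow_aux (hM1 n) D
      have hpow0 : (0:ℝ) ≤ M n ^ D := by positivity
      refine max_le ?_ ?_
      · nlinarith
      · calc ∑ j, v (x (n+m) j) = ∑ j, v (MvPolynomial.eval (x n) (q j)) :=
              Finset.sum_congr rfl fun j _ => by rw [hxm n j]
          _ ≤ ∑ j, (∑ s ∈ (q j).support, v (MvPolynomial.coeff s (q j)))
                * M n ^ (q j).totalDegree :=
              Finset.sum_le_sum fun j _ => eval_abs_bound v (x n) (q j)
          _ ≤ ∑ j, (∑ s ∈ (q j).support, v (MvPolynomial.coeff s (q j))) * M n ^ D :=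
              Finset.sum_le_sum fun j _ => mul_le_mul_of_nonneg_left
                (pow_le_pow_right₀ (hM1 n) (hqD j))
                (Finset.sum_nonneg fun s _ => v.nonneg _)
          _ = (∑ j, ∑ s ∈ (q j).support, v (MvPolynomial.coeff s (q j))) * M n ^ D :=
              (Finset.sum_mul _ _ _).symm
          _ ≤ C * M n ^ D := mul_le_mul_of_nonneg_right (le_max_right _ _) hpow0
    set c : ℝ := Real.log C with hcdef
    set L : ℕ → ℝ := fun n => Real.log (M n) with hLdef
    have hL0 : ∀ n, 0 ≤ L n := fun n => Real.log_nonneg (hM1 n)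
    have hc0 : 0 ≤ c := Real.log_nonneg hC1
    have hrecL : ∀ n, L (n + m) ≤ c + (D:ℝ) * L n := by
      intro n
      have h1 := Real.log_le_log (hM0 (n+m)) (hrec n)
      rwa [Real.log_mul (ne_of_gt hC0) (ne_of_gt (pow_pos (hM0 n) D)),
        Real.log_pow] at h1
    have hiter : ∀ k r, L (m * k + r) ≤ (L r + c * k) * (D:ℝ) ^ k := by
      intro k
      induction k with
      | zero => intro r; simp
      | succ k ih =>
        intro r
        have hidx : m * (k+1) + r = (m * k + r) + m := by ring
        have hDk : (1:ℝ) ≤ (D:ℝ)^(k+1) := one_le_pow_aux hD1 (k+1)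
        have hDk0 : (0:ℝ) ≤ (D:ℝ)^k := by positivity
        have hkR : (0:ℝ) ≤ (k:ℝ) := Nat.cast_nonneg k
        rw [hidx]
        calc L ((m*k+r) + m) ≤ c + (D:ℝ) * L (m*k+r) := hrecL _
          _ ≤ c + (D:ℝ) * ((L r + c*k) * (D:ℝ)^k) := by
              have h5 := ih r
              have hLr := hL0 r
              nlinarith
          _ = (L r + c*k) * (D:ℝ)^(k+1) + c := by ring
          _ ≤ (L r + c*k) * (D:ℝ)^(k+1) + c * (D:ℝ)^(k+1) := by nlinarith
          _ = (L r + c*((k:ℕ)+1:ℕ)) * (D:ℝ)^(k+1) := by push_cast; ring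
    set A : ℝ := 1 + |Real.log ε| + c + ∑ r ∈ Finset.range m, L r with hAdef
    have hsum0 : 0 ≤ ∑ r ∈ Finset.range m, L r := Finset.sum_nonneg fun r _ => hL0 r
    have habsE : 0 ≤ |Real.log ε| := abs_nonneg _
    have hA1 : (1:ℝ) ≤ A := by rw [hAdef]; linarith
    have hA0 : (0:ℝ) < A := lt_of_lt_of_le one_pos hA1
    have hAr : ∀ r < m, L r ≤ A := by
      intro r hr
      have h6 : L r ≤ ∑ i ∈ Finset.range m, L i :=
        Finset.single_le_sum (fun i _ => hL0 i) (Finset.mem_range.2 hr)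
      rw [hAdef]; linarith
    have hAc : c ≤ A := by rw [hAdef]; linarith
    have hAe : |Real.log ε| ≤ A := by rw [hAdef]; linarith
    have hbound : ∀ n : ℕ, Real.log (Real.log (v (x n ⟨0,hN⟩))) ≤
        Real.log A + Real.log (((n/m : ℕ) : ℝ) + 1) + ((n/m : ℕ) : ℝ) * Real.log D := by
      intro n
      have hDk1 : (1:ℝ) ≤ (D:ℝ)^(n/m) := one_le_pow_aux hD1 _
      have hk0 : (0:ℝ) ≤ ((n/m : ℕ):ℝ) := Nat.cast_nonneg _
      have hk1 : (1:ℝ) ≤ ((n/m : ℕ):ℝ) + 1 := by linarith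
      have hAbig : A ≤ A * (((n/m : ℕ):ℝ)+1) * (D:ℝ)^(n/m) :=
        le_mul3_aux hA0.le hk1 hDk1
      have hBig1 : (1:ℝ) ≤ A * (((n/m : ℕ):ℝ)+1) * (D:ℝ)^(n/m) := hA1.trans hAbig
      have hLn : L n ≤ A * (((n/m : ℕ):ℝ)+1) * (D:ℝ)^(n/m) := by
        have h0 : m * (n/m) + n % m = n := Nat.div_add_mod n m
        have h1 : L n ≤ (L (n % m) + c * ((n/m : ℕ):ℝ)) * (D:ℝ)^(n/m) := by
          conv_lhs => rw [← h0]
          exact hiter (n/m) (n % m)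
        have h2 : L (n % m) ≤ A := hAr _ (Nat.mod_lt n hm0)
        have h2b : L (n % m) + c * ((n/m : ℕ):ℝ) ≤ A * (((n/m : ℕ):ℝ)+1) := by
          nlinarith [mul_le_mul_of_nonneg_right hAc hk0]
        calc L n ≤ (L (n % m) + c * ((n/m : ℕ):ℝ)) * (D:ℝ)^(n/m) := h1
          _ ≤ (A * (((n/m : ℕ):ℝ)+1)) * (D:ℝ)^(n/m) :=
            mul_le_mul_of_nonneg_right h2b (by positivity)
          _ = A * (((n/m : ℕ):ℝ)+1) * (D:ℝ)^(n/m) := by ring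
      have hup : Real.log (v (x n ⟨0,hN⟩)) ≤ L n := by
        have h1 : v (x n ⟨0,hN⟩) ≤ M n :=
          le_trans (Finset.single_le_sum (fun i _ => v.nonneg _) (Finset.mem_univ _))
            (le_max_right _ _)
        exact Real.log_le_log (lt_trans hε (hbig n)) h1
      have hlo : Real.log ε ≤ Real.log (v (x n ⟨0,hN⟩)) :=
        Real.log_le_log hε (hbig n).le
      have habs : |Real.log (v (x n ⟨0,hN⟩))| ≤ A * (((n/m : ℕ):ℝ)+1) * (D:ℝ)^(n/m) := by
        rw [abs_le]
        constructor
        · have h7 : |Real.log ε| ≤ A * (((n/m : ℕ):ℝ)+1) * (D:ℝ)^(n/m) := hAe.trans hAbig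
          linarith [neg_abs_le (Real.log ε)]
        · linarith
      have h8 := log_mono_aux (abs_nonneg _) hBig1 habs
      rw [Real.log_abs] at h8
      refine h8.trans (le_of_eq ?_)
      have hk1' : (0:ℝ) < ((n/m : ℕ):ℝ) + 1 := by linarith
      have hDk0 : (0:ℝ) < (D:ℝ)^(n/m) := by linarith
      have h9 : (0:ℝ) < A * (((n/m : ℕ):ℝ)+1) := mul_pos hA0 hk1'
      rw [Real.log_mul (ne_of_gt h9) (ne_of_gt hDk0),
        Real.log_mul (ne_of_gt hA0) (ne_of_gt hk1'), Real.log_pow]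
    set G : ℕ → ℝ := fun n => Real.log A / n + Real.log (((n/m : ℕ):ℝ) + 1) / n
        + (((n/m : ℕ) : ℝ) / n) * Real.log D with hGdef
    have hGt : Tendsto G atTop (nhds (Real.log D / m)) := by
      have t1 : Tendsto (fun n : ℕ => Real.log A / n) atTop (nhds 0) :=
        tendsto_const_div_atTop_nhds_zero_nat _
      have t2 : Tendsto (fun n : ℕ => Real.log (((n/m : ℕ):ℝ) + 1) / n) atTop (nhds 0) := by
        refine tendsto_of_tendsto_of_tendsto_of_le_of_le' tendsto_const_nhds
          tendsto_log_succ_div ?_ ?_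
        · filter_upwards with n
          have : 0 ≤ Real.log (((n/m : ℕ):ℝ) + 1) :=
            Real.log_nonneg (by have := Nat.cast_nonneg (α := ℝ) (n/m); linarith)
          positivity
        · filter_upwards [eventually_ge_atTop 1] with n hn
          have hn0 : (0:ℝ) < n := by exact_mod_cast hn
          refine (div_le_div_iff_of_pos_right hn0).2 ?_
          refine log_mono_aux (by have := Nat.cast_nonneg (α := ℝ) (n/m); linarith)
            (by have := Nat.cast_nonneg (α := ℝ) n; linarith) ?_
          have : ((n/m : ℕ):ℝ) ≤ (n:ℝ) := Nat.cast_le.2 (Nat.div_le_self n m)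
          linarith
      have t3 := tendsto_natdiv_div hm0
      have t4 := (t1.add t2).add ((t3.mul (tendsto_const_nhds (x := Real.log D))))
      have h9 : (0:ℝ) + 0 + (1/(m:ℝ)) * Real.log D = Real.log D / m := by ring
      rwa [h9] at t4
    have hcmp : (fun n : ℕ => ((Real.log (Real.log (v (x n ⟨0,hN⟩))) / n : ℝ) : EReal))
        ≤ᶠ[atTop] (fun n : ℕ => ((G n : ℝ) : EReal)) := by
      filter_upwards [eventually_ge_atTop 1] with n hn
      have hn0 : (0:ℝ) < n := by exact_mod_cast hn
      rw [EReal.coe_le_coe_iff]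
      have hGn : G n = (Real.log A + Real.log (((n/m : ℕ):ℝ) + 1)
          + ((n/m : ℕ):ℝ) * Real.log D) / n := by
        rw [hGdef]; ring
      rw [hGn]
      exact (div_le_div_iff_of_pos_right hn0).2 (hbound n)
    calc Filter.atTop.limsup (fun n : ℕ =>
          ((Real.log (Real.log (v (x n ⟨0, hN⟩))) / n : ℝ) : EReal))
        ≤ Filter.atTop.limsup (fun n : ℕ => ((G n : ℝ) : EReal)) :=
          Filter.limsup_le_limsup hcmp
      _ = ((Real.log D / m : ℝ) : EReal) :=
          Filter.Tendsto.limsup_eq ((EReal.tendsto_coe).2 hGt)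
      _ = ((Real.log d / m : ℝ) : EReal) := by
          rcases Nat.eq_zero_or_pos d with h | h
          · rw [hD, h]
            norm_num
          · rw [hD, max_eq_right h]
      _ = ((Real.log (relDeg (φ ^ m) π) / m : ℝ) : EReal) := by rw [hd]
  have h1 : ∀ᶠ m : ℕ in Filter.atTop,
      Filter.atTop.limsup (fun n : ℕ =>
        ((Real.log (Real.log (v (x n ⟨0, hN⟩))) / n : ℝ) : EReal))
      ≤ ((Real.log (relDeg (φ ^ m) π) / m : ℝ) : EReal) :=
    Filter.eventually_atTop.2 ⟨1, fun m hm => key m hm⟩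
  exact le_trans (Filter.le_liminf_of_le (by isBoundedDefault) h1) Filter.liminf_le_limsup
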